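/- If some λᵢ appearing in the model has the 'wrong sign' for degree q — i.e. it is NOT the case that λᵢ < 0 for all i ≤ q and λᵢ > 0 for all i > q — then any f ∈ C^∞(ℂⁿ) ∩ L²(ℂⁿ) solving the system ∂f/∂zⁱ = λᵢ\bar{z}ⁱf (i ≤ q), ∂f/∂\bar{z}ⁱ = −λᵢzⁱf (i > q) must vanish identically. Equivalently, Ker □^{(q)}_{0,s} = {0} when p ∉ M(q). -/

import Mathlib

open MeasureTheory

/-- The Wirtinger derivative `∂/∂zⁱ`. -/
noncomputable def wD {n : ℕ} (i : Fin n) (f : (Fin n → ℂ) → ℂ) (z : Fin n → ℂ) : ℂ :=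
  (1 / 2) * (fderiv ℝ f z (Pi.single i 1) - Complex.I * fderiv ℝ f z (Pi.single i Complex.I))

/-- The Wirtinger derivative `∂/∂z̄ⁱ`. -/
noncomputable def wDb {n : ℕ} (i : Fin n) (f : (Fin n → ℂ) → ℂ) (z : Fin n → ℂ) : ℂ :=
  (1 / 2) * (fderiv ℝ f z (Pi.single i 1) + Complex.I * fderiv ℝ f z (Pi.single i Complex.I))

section Aux

open Complex Set Real

lemma cr_diff {F : ℂ → ℂ} {L : ℂ →L[ℝ] ℂ} {w : ℂ}
    (hF : HasFDerivAt F L w) (hL : L Complex.I = Complex.I * L 1) :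
    DifferentiableAt ℂ F w := by
  have key : (((ContinuousLinearMap.id ℂ ℂ).smulRight (L 1)).restrictScalars ℝ) = L := by
    ext v
    have hv : (v.re : ℂ) * 1 + (v.im : ℂ) * Complex.I = v := by
      simpa using v.re_add_im
    have hL2 : L v = L ((v.re : ℝ) • (1:ℂ) + (v.im : ℝ) • Complex.I) := by
      congr 1
      simp [Complex.real_smul, hv]
    calc (((ContinuousLinearMap.id ℂ ℂ).smulRight (L 1)).restrictScalars ℝ) v
        = v * L 1 := by simp [ContinuousLinearMap.smulRight_apply, smul_eq_mul]
      _ = (v.re : ℂ) * L 1 + (v.im : ℂ) * (Complex.I * L 1) := by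
          conv_lhs => rw [← hv]
          ring
      _ = L v := by
          rw [← hL, hL2, L.map_add, L.map_smul, L.map_smul]
          simp [Complex.real_smul]
  exact (hasFDerivAt_of_restrictScalars ℝ hF key).differentiableAt

lemma circle_avg {G : ℂ → ℂ} (hG : Differentiable ℂ G) (c : ℂ) {r : ℝ} (hr : 0 < r) :
    ‖G c‖ ^ 2 * (2 * Real.pi) ≤ ∫ θ in (0:ℝ)..(2 * Real.pi), ‖G (circleMap c r θ)‖ ^ 2 := by
  have hK : Differentiable ℂ (fun z => G z ^ 2) := fun z => ((hG z).pow 2)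
  have hdc : DiffContOnCl ℂ (fun z => G z ^ 2) (Metric.ball c r) :=
    (hK.differentiableOn).diffContOnCl
  have hc : c ∈ Metric.ball c r := Metric.mem_ball_self hr
  have cau := hdc.circleIntegral_sub_inv_smul hc
  rw [circleIntegral] at cau
  have h1 : ∀ θ : ℝ, deriv (circleMap c r) θ • ((circleMap c r θ - c)⁻¹ • (G (circleMap c r θ))^2)
      = Complex.I * (G (circleMap c r θ))^2 := by
    intro θ
    rw [deriv_circleMap, circleMap_sub_center]
    have hne : circleMap 0 r θ ≠ 0 := by
      simp only [circleMap, zero_add, ne_eq, mul_eq_zero, Complex.ofReal_eq_zero,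
        Complex.exp_ne_zero, or_false]
      exact hr.ne'
    field_simp
    simp only [smul_eq_mul, one_div]
    rw [mul_comm (circleMap 0 r θ) Complex.I, mul_assoc, ← mul_assoc (circleMap 0 r θ),
      mul_inv_cancel₀ hne, one_mul]
  simp_rw [h1] at cau
  rw [intervalIntegral.integral_const_mul] at cau
  have hint : (∫ θ in (0:ℝ)..(2*Real.pi), (G (circleMap c r θ))^2)
      = ((2 * Real.pi : ℝ) : ℂ) * (G c)^2 := by
    apply mul_left_cancel₀ Complex.I_ne_zero
    rw [cau, smul_eq_mul]
    push_cast
    ring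
  have h3 : ‖G c‖^2 * (2 * Real.pi) = ‖∫ θ in (0:ℝ)..(2*Real.pi), (G (circleMap c r θ))^2‖ := by
    rw [hint, norm_mul, Complex.norm_real, Real.norm_eq_abs,
      _root_.abs_of_nonneg Real.two_pi_pos.le, norm_pow]
    ring
  rw [h3]
  calc ‖∫ θ in (0:ℝ)..(2*Real.pi), (G (circleMap c r θ))^2‖
      ≤ ∫ θ in (0:ℝ)..(2*Real.pi), ‖(G (circleMap c r θ))^2‖ :=
        intervalIntegral.norm_integral_le_integral_norm Real.two_pi_pos.le
    _ = ∫ θ in (0:ℝ)..(2*Real.pi), ‖G (circleMap c r θ)‖^2 := by simp_rw [norm_pow]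

lemma lintegral_comp_polarCoord_symm' (g : ℝ × ℝ → ENNReal) :
    (∫⁻ p in polarCoord.target, ENNReal.ofReal p.1 * g (polarCoord.symm p)) = ∫⁻ p, g p := by
  set B : ℝ × ℝ → ℝ × ℝ →L[ℝ] ℝ × ℝ := fun p =>
    LinearMap.toContinuousLinearMap (Matrix.toLin (Module.Basis.finTwoProd ℝ) (Module.Basis.finTwoProd ℝ)
      !![Real.cos p.2, -p.1 * Real.sin p.2; Real.sin p.2, p.1 * Real.cos p.2])
  have A : ∀ p ∈ polarCoord.target, HasFDerivWithinAt polarCoord.symm (B p) polarCoord.target p :=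
    fun p _ => (hasFDerivAt_polarCoord_symm p).hasFDerivWithinAt
  have B_det : ∀ p, (B p).det = p.1 := by
    intro p
    conv_rhs => rw [← one_mul p.1, ← Real.cos_sq_add_sin_sq p.2]
    simp only [B, neg_mul, LinearMap.det_toContinuousLinearMap, LinearMap.det_toLin,
      Matrix.det_fin_two_of, sub_neg_eq_add]
    ring
  symm
  calc
    ∫⁻ p, g p = ∫⁻ p in polarCoord.source, g p := by
      rw [← setLIntegral_univ]
      exact (setLIntegral_congr polarCoord_source_ae_eq_univ.symm)
    _ = ∫⁻ p in polarCoord.symm '' polarCoord.target, g p := by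
      rw [polarCoord.symm_image_target_eq_source]
    _ = ∫⁻ p in polarCoord.target, ENNReal.ofReal |(B p).det| * g (polarCoord.symm p) := by
      apply lintegral_image_eq_lintegral_abs_det_fderiv_mul volume
        polarCoord.open_target.measurableSet A polarCoord.symm.injOn g
    _ = ∫⁻ p in polarCoord.target, ENNReal.ofReal p.1 * g (polarCoord.symm p) := by
      apply setLIntegral_congr_fun polarCoord.open_target.measurableSet
      intro p hp
      dsimp only
      rw [B_det, abs_of_pos hp.1]

lemma Complex.lintegral_comp_polarCoord_symm' (g : ℂ → ENNReal) :
    (∫⁻ p in polarCoord.target, ENNReal.ofReal p.1 * g (Complex.polarCoord.symm p))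
      = ∫⁻ z, g z := by
  rw [← (Complex.volume_preserving_equiv_real_prod.symm).lintegral_comp_emb
    Complex.measurableEquivRealProd.symm.measurableEmbedding g,
    ← _root_.lintegral_comp_polarCoord_symm']
  rfl

lemma slice_entire {μc : ℝ} {h : ℂ → ℂ} (hdiff : Differentiable ℝ h)
    (heq : ∀ w, fderiv ℝ h w 1 - Complex.I * fderiv ℝ h w Complex.I
      = 2 * (μc:ℂ) * (starRingEnd ℂ) w * h w) :
    Differentiable ℂ (fun w => (starRingEnd ℂ)
      (h w * Complex.exp (-(μc:ℂ) * (w * (starRingEnd ℂ) w)))) := by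
  intro w
  set C : ℂ →L[ℝ] ℂ := (Complex.conjCLE : ℂ ≃L[ℝ] ℂ).toContinuousLinearMap with hC
  have hCapp : ∀ v : ℂ, C v = (starRingEnd ℂ) v := fun v => rfl
  have hconj : HasFDerivAt (fun z : ℂ => (starRingEnd ℂ) z) C w := C.hasFDerivAt
  have hid : HasFDerivAt (fun z : ℂ => z) (ContinuousLinearMap.id ℝ ℂ) w :=
    (ContinuousLinearMap.id ℝ ℂ).hasFDerivAt
  have hq : HasFDerivAt (fun z : ℂ => z * (starRingEnd ℂ) z)
      (w • C + (ContinuousLinearMap.id ℝ ℂ).smulRight ((starRingEnd ℂ) w)) w :=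
    hid.mul' hconj
  have he : HasFDerivAt (fun z : ℂ => -(μc:ℂ) * (z * (starRingEnd ℂ) z))
      (-(μc:ℂ) • (w • C + (ContinuousLinearMap.id ℝ ℂ).smulRight ((starRingEnd ℂ) w))) w :=
    hq.const_mul _
  have hE : HasFDerivAt (fun z : ℂ => Complex.exp (-(μc:ℂ) * (z * (starRingEnd ℂ) z)))
      (Complex.exp (-(μc:ℂ) * (w * (starRingEnd ℂ) w)) •
        (-(μc:ℂ) • (w • C + (ContinuousLinearMap.id ℝ ℂ).smulRight ((starRingEnd ℂ) w)))) w :=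
    he.cexp
  have hDh : HasFDerivAt h (fderiv ℝ h w) w := (hdiff w).hasFDerivAt
  set E := fun z : ℂ => Complex.exp (-(μc:ℂ) * (z * (starRingEnd ℂ) z)) with hEdef
  set Lg := (h w • (E w •
        (-(μc:ℂ) • (w • C + (ContinuousLinearMap.id ℝ ℂ).smulRight ((starRingEnd ℂ) w)))) +
      (fderiv ℝ h w).smulRight (E w)) with hLg
  have hg : HasFDerivAt (fun z : ℂ => h z * E z) Lg w := hDh.mul' hE
  have hconj2 : HasFDerivAt (fun z : ℂ => (starRingEnd ℂ) z) C (h w * E w) := C.hasFDerivAt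
  have hG : HasFDerivAt (fun z : ℂ => (starRingEnd ℂ) (h z * E z)) (C.comp Lg) w :=
    hconj2.comp w hg
  apply cr_diff hG
  have hLg1 : Lg 1 = h w * (E w * (-(μc:ℂ) * (w * 1 + 1 * (starRingEnd ℂ) w)))
      + fderiv ℝ h w 1 * E w := by
    simp [hLg, hCapp, smul_eq_mul]
    ring
  have hLgI : Lg Complex.I = h w * (E w * (-(μc:ℂ) * (w * (starRingEnd ℂ) Complex.I
      + Complex.I * (starRingEnd ℂ) w))) + fderiv ℝ h w Complex.I * E w := by
    simp [hLg, hCapp, smul_eq_mul]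
    ring
  have hconj_eq : (starRingEnd ℂ) (fderiv ℝ h w 1) + Complex.I * (starRingEnd ℂ)
      (fderiv ℝ h w Complex.I) = 2 * (μc:ℂ) * w * (starRingEnd ℂ) (h w) := by
    have := congrArg (starRingEnd ℂ) (heq w)
    simp only [map_sub, map_mul, Complex.conj_I, Complex.conj_conj, map_ofNat,
      Complex.conj_ofReal] at this
    linear_combination this
  have h1 : (C.comp Lg) 1 = (starRingEnd ℂ) (Lg 1) := rfl
  have hI : (C.comp Lg) Complex.I = (starRingEnd ℂ) (Lg Complex.I) := rfl
  rw [h1, hI, hLg1, hLgI]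
  simp only [map_add, map_mul, map_neg, Complex.conj_I, Complex.conj_conj, map_one,
    Complex.conj_ofReal]
  linear_combination (-Complex.I) * (starRingEnd ℂ) (E w) * hconj_eq + (starRingEnd ℂ) (E w) * (starRingEnd ℂ) ((fderiv ℝ h w) Complex.I) * Complex.I_sq

lemma slice_infinite {μc : ℝ} (hμ : 0 < μc) {h : ℂ → ℂ} (hdiff : Differentiable ℝ h)
    (heq : ∀ w, fderiv ℝ h w 1 - Complex.I * fderiv ℝ h w Complex.I
      = 2 * (μc:ℝ) * (starRingEnd ℂ) w * h w)
    {c : ℂ} (hc : h c ≠ 0) :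
    ∫⁻ w : ℂ, ENNReal.ofReal (‖h w‖^2) = ⊤ := by
  classical
  set G : ℂ → ℂ := fun w => (starRingEnd ℂ)
      (h w * Complex.exp (-(μc:ℂ) * (w * (starRingEnd ℂ) w))) with hGdef
  have hG : Differentiable ℂ G := slice_entire hdiff heq
  have hGcont : Continuous G := hG.continuous
  have hhcont : Continuous h := hdiff.continuous
  -- norm identity
  have hnorm' : ∀ w : ℂ, ‖h w‖^2 = ‖G w‖^2 * Real.exp (2*μc * Complex.normSq w) := by
    intro w
    have h1 : (w * (starRingEnd ℂ) w) = (Complex.normSq w : ℂ) := Complex.mul_conj w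
    rw [hGdef]
    simp only [RCLike.norm_conj, norm_mul, Complex.norm_exp]
    rw [h1]
    have h2 : (-(μc:ℂ) * (Complex.normSq w : ℂ)).re = -μc * Complex.normSq w := by
      simp
    rw [h2, mul_pow, ← Real.exp_nat_mul, mul_assoc, ← Real.exp_add]
    rw [show ((2:ℕ):ℝ) * (-μc * normSq w) + 2*μc*normSq w = 0 by push_cast; ring,
      Real.exp_zero, mul_one]
  have hGc : G c ≠ 0 := by
    rw [hGdef]
    simp only [ne_eq, map_eq_zero, mul_eq_zero, not_or]
    exact ⟨hc, Complex.exp_ne_zero _⟩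
  set K := ‖G c‖^2 with hK
  have hKpos : 0 < K := by rw [hK]; exact pow_pos (norm_pos_iff.mpr hGc) 2
  -- reduce to translated polar integral
  set Φ : ℂ → ENNReal := fun u => ENNReal.ofReal (‖h (c + u)‖^2) with hΦ
  have htrans : ∫⁻ w : ℂ, ENNReal.ofReal (‖h w‖^2) = ∫⁻ u : ℂ, Φ u :=
    (lintegral_add_left_eq_self (fun w => ENNReal.ofReal (‖h w‖^2)) c).symm
  have hpolar := Complex.lintegral_comp_polarCoord_symm' Φ
  have hsymm : ∀ p : ℝ × ℝ, c + Complex.polarCoord.symm p = circleMap c p.1 p.2 := by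
    intro p
    rw [Complex.polarCoord_symm_apply, circleMap, Complex.exp_mul_I]
    push_cast
    ring
  have hcircont : Continuous fun p : ℝ × ℝ => circleMap c p.1 p.2 := by
    have : Continuous fun p : ℝ × ℝ => c + (p.1 : ℂ) * Complex.exp ((p.2 : ℂ) * Complex.I) :=
      continuous_const.add ((Complex.continuous_ofReal.comp continuous_fst).mul
        (Complex.continuous_exp.comp ((Complex.continuous_ofReal.comp continuous_snd).mul
          continuous_const)))
    simpa [circleMap] using this
  have hmeas : Measurable fun p : ℝ × ℝ =>
      ENNReal.ofReal p.1 * ENNReal.ofReal (‖h (circleMap c p.1 p.2)‖^2) :=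
    (measurable_fst.ennreal_ofReal).mul
      (((hhcont.comp hcircont).norm.pow 2).measurable.ennreal_ofReal)
  have htarget : polarCoord.target = Ioi (0:ℝ) ×ˢ Ioo (-Real.pi) Real.pi := rfl
  have hsplit : (∫⁻ p in polarCoord.target, ENNReal.ofReal p.1 * Φ (Complex.polarCoord.symm p))
      = ∫⁻ r in Ioi (0:ℝ), ∫⁻ θ in Ioo (-Real.pi) Real.pi,
          ENNReal.ofReal r * ENNReal.ofReal (‖h (circleMap c r θ)‖^2) := by
    have hrw : ∀ p : ℝ × ℝ, ENNReal.ofReal p.1 * Φ (Complex.polarCoord.symm p)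
        = ENNReal.ofReal p.1 * ENNReal.ofReal (‖h (circleMap c p.1 p.2)‖^2) := by
      intro p; simp only [hΦ]; rw [hsymm p]
    simp_rw [hrw]
    rw [htarget, Measure.volume_eq_prod, ← Measure.prod_restrict,
      lintegral_prod _ hmeas.aemeasurable]
  -- circle average, ENNReal version
  have stepA : ∀ r : ℝ, 0 < r → ENNReal.ofReal (K * (2 * Real.pi)) ≤
      ∫⁻ θ in Ioo (-Real.pi) Real.pi, ENNReal.ofReal (‖G (circleMap c r θ)‖^2) := by
    intro r hr
    have hψcont : Continuous fun θ : ℝ => ‖G (circleMap c r θ)‖^2 :=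
      ((hGcont.comp (continuous_circleMap c r)).norm.pow 2)
    have hper : Function.Periodic (fun θ : ℝ => ‖G (circleMap c r θ)‖^2) (2*Real.pi) := by
      intro θ
      simp [periodic_circleMap c r θ]
    have hshift := hper.intervalIntegral_add_eq (-Real.pi) 0
    have he1 : -Real.pi + 2*Real.pi = Real.pi := by ring
    have he2 : (0:ℝ) + 2*Real.pi = 2*Real.pi := by ring
    rw [he1, he2] at hshift
    have havg := circle_avg hG c hr
    rw [← hshift] at havg
    rw [intervalIntegral.integral_of_le (by linarith [Real.pi_pos])] at havg
    have hInt : IntegrableOn (fun θ : ℝ => ‖G (circleMap c r θ)‖^2)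
        (Ioc (-Real.pi) Real.pi) volume := hψcont.integrableOn_Ioc
    have hofReal := ofReal_integral_eq_lintegral_ofReal hInt
      (ae_of_all _ (fun θ => by positivity))
    calc ENNReal.ofReal (K * (2 * Real.pi))
        ≤ ENNReal.ofReal (∫ θ in Ioc (-Real.pi) Real.pi, ‖G (circleMap c r θ)‖^2) :=
          ENNReal.ofReal_le_ofReal havg
      _ = ∫⁻ θ in Ioc (-Real.pi) Real.pi, ENNReal.ofReal (‖G (circleMap c r θ)‖^2) := hofReal
      _ = ∫⁻ θ in Ioo (-Real.pi) Real.pi, ENNReal.ofReal (‖G (circleMap c r θ)‖^2) :=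
          (setLIntegral_congr Ioo_ae_eq_Ioc).symm
  -- pointwise lower bound on circles
  have hlow : ∀ (T r θ : ℝ), ‖c‖ ≤ T → T ≤ r →
      Real.exp (2*μc*(T - ‖c‖)^2) * ‖G (circleMap c r θ)‖^2
        ≤ ‖h (circleMap c r θ)‖^2 := by
    intro T r θ hT hTr
    rw [hnorm' (circleMap c r θ), mul_comm]
    have habs : T - ‖c‖ ≤ ‖circleMap c r θ‖ := by
      have h1 : ‖circleMap c r θ - c‖ = |r| := by
        rw [circleMap_sub_center, norm_circleMap_zero]
      have h2 : ‖circleMap c r θ - c‖ ≤ ‖circleMap c r θ‖ + ‖c‖ := norm_sub_le _ _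
      have h3 : r ≤ |r| := le_abs_self r
      have h4 : ‖c‖ = ‖c‖ := rfl
      linarith
    have hTc : 0 ≤ T - ‖c‖ := by linarith [norm_nonneg c]
    have hsq : (T - ‖c‖)^2 ≤ Complex.normSq (circleMap c r θ) := by
      rw [← Complex.sq_norm]
      exact pow_le_pow_left₀ hTc habs 2
    gcongr
  -- conclusion: integral dominates every real number
  have hbig : ∀ M : ℝ, ENNReal.ofReal M ≤ ∫⁻ w : ℂ, ENNReal.ofReal (‖h w‖^2) := by
    intro M
    set T : ℝ := ‖c‖ + 1 + |M| / (4 * Real.pi * K * μc) with hT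
    have hMnn : 0 ≤ |M| / (4 * Real.pi * K * μc) := by positivity
    have hcT : ‖c‖ ≤ T := by rw [hT]; linarith
    have hTpos : 0 < T := by
      rw [hT]; have := norm_nonneg c; linarith
    set s : ℝ := T - ‖c‖ with hs
    have hs1 : 1 ≤ s := by rw [hs, hT]; linarith
    set CT : ℝ := T * (Real.exp (2*μc*s^2) * (K * (2*Real.pi))) with hCT
    have hMCT : M ≤ CT := by
      have hexp : 2*μc*s^2 ≤ Real.exp (2*μc*s^2) := by
        have := Real.add_one_le_exp (2*μc*s^2)
        nlinarith [sq_nonneg s, hμ]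
      have hpi := Real.pi_pos
      have hc1 : 2*μc*s ≤ 2*μc*s^2 := by
        nlinarith [mul_nonneg (mul_nonneg hμ.le (by linarith : (0:ℝ) ≤ s - 1))
          (by linarith : (0:ℝ) ≤ s)]
      have hc3 : (2*μc*s) * (K*(2*Real.pi)) ≤ Real.exp (2*μc*s^2) * (K*(2*Real.pi)) :=
        mul_le_mul_of_nonneg_right (le_trans hc1 hexp) (by positivity)
      have hT1 : 1 ≤ T := by rw [hT]; have := norm_nonneg c; linarith
      have hc4 : Real.exp (2*μc*s^2) * (K*(2*Real.pi))
          ≤ T * (Real.exp (2*μc*s^2) * (K*(2*Real.pi))) := by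
        nlinarith [mul_nonneg (mul_nonneg (by linarith : (0:ℝ) ≤ T - 1)
          (Real.exp_pos (2*μc*s^2)).le) (by positivity : (0:ℝ) ≤ K*(2*Real.pi))]
      have hs0 : s = 1 + |M| / (4 * Real.pi * K * μc) := by rw [hs, hT]; ring
      have hMs : 4 * Real.pi * K * μc * s = 4 * Real.pi * K * μc + |M| := by
        rw [hs0]; field_simp
      have hM : M ≤ |M| := le_abs_self M
      have hrw : (2*μc*s) * (K*(2*Real.pi)) = 4 * Real.pi * K * μc * s := by ring
      have h4nn : (0:ℝ) ≤ 4 * Real.pi * K * μc := by positivity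
      rw [hCT]
      linarith
    -- inner bound for r in Ioc T (T+1)
    have hinner : ∀ r : ℝ, r ∈ Ioc T (T+1) →
        ENNReal.ofReal CT ≤ ∫⁻ θ in Ioo (-Real.pi) Real.pi,
          ENNReal.ofReal r * ENNReal.ofReal (‖h (circleMap c r θ)‖^2) := by
      intro r hr
      have hrT : T ≤ r := hr.1.le
      have hrpos : 0 < r := lt_of_lt_of_le hTpos hrT
      have hpt : ∀ θ : ℝ,
          ENNReal.ofReal T * (ENNReal.ofReal (Real.exp (2*μc*s^2)) *
            ENNReal.ofReal (‖G (circleMap c r θ)‖^2))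
          ≤ ENNReal.ofReal r * ENNReal.ofReal (‖h (circleMap c r θ)‖^2) := by
        intro θ
        rw [← ENNReal.ofReal_mul (by positivity)]
        exact mul_le_mul (ENNReal.ofReal_le_ofReal hrT)
          (ENNReal.ofReal_le_ofReal (by rw [hs]; exact hlow T r θ hcT hrT))
          (zero_le) (zero_le)
      calc ENNReal.ofReal CT
          = ENNReal.ofReal T * (ENNReal.ofReal (Real.exp (2*μc*s^2)) *
              ENNReal.ofReal (K * (2*Real.pi))) := by
            rw [hCT, ENNReal.ofReal_mul hTpos.le, ENNReal.ofReal_mul (Real.exp_pos _).le]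
        _ ≤ ENNReal.ofReal T * (ENNReal.ofReal (Real.exp (2*μc*s^2)) *
              ∫⁻ θ in Ioo (-Real.pi) Real.pi, ENNReal.ofReal (‖G (circleMap c r θ)‖^2)) := by
            gcongr
            exact stepA r hrpos
        _ = ∫⁻ θ in Ioo (-Real.pi) Real.pi, ENNReal.ofReal T *
              (ENNReal.ofReal (Real.exp (2*μc*s^2)) *
                ENNReal.ofReal (‖G (circleMap c r θ)‖^2)) := by
            rw [lintegral_const_mul' _ _ ENNReal.ofReal_ne_top,
              lintegral_const_mul' _ _ ENNReal.ofReal_ne_top]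
        _ ≤ ∫⁻ θ in Ioo (-Real.pi) Real.pi,
              ENNReal.ofReal r * ENNReal.ofReal (‖h (circleMap c r θ)‖^2) := by
            exact lintegral_mono (fun θ => hpt θ)
    calc ENNReal.ofReal M ≤ ENNReal.ofReal CT := ENNReal.ofReal_le_ofReal hMCT
      _ = ENNReal.ofReal CT * volume (Ioc T (T+1)) := by
          rw [Real.volume_Ioc]
          norm_num
      _ = ∫⁻ _ in Ioc T (T+1), ENNReal.ofReal CT := (setLIntegral_const _ _).symm
      _ ≤ ∫⁻ r in Ioc T (T+1), ∫⁻ θ in Ioo (-Real.pi) Real.pi,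
            ENNReal.ofReal r * ENNReal.ofReal (‖h (circleMap c r θ)‖^2) :=
          setLIntegral_mono' measurableSet_Ioc hinner
      _ ≤ ∫⁻ r in Ioi (0:ℝ), ∫⁻ θ in Ioo (-Real.pi) Real.pi,
            ENNReal.ofReal r * ENNReal.ofReal (‖h (circleMap c r θ)‖^2) := by
          apply lintegral_mono_set
          intro x hx
          exact lt_of_lt_of_le hTpos hx.1.le
      _ = ∫⁻ w : ℂ, ENNReal.ofReal (‖h w‖^2) := by rw [← hsplit, hpolar, ← htrans]
  by_contra hne
  have hlt : ∫⁻ w : ℂ, ENNReal.ofReal (‖h w‖^2) < ⊤ := lt_top_iff_ne_top.2 hne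
  have hb := hbig ((∫⁻ w : ℂ, ENNReal.ofReal (‖h w‖^2)).toReal + 1)
  have hb2 : ENNReal.ofReal ((∫⁻ w : ℂ, ENNReal.ofReal (‖h w‖^2)).toReal + 1)
      ≤ ENNReal.ofReal ((∫⁻ w : ℂ, ENNReal.ofReal (‖h w‖^2)).toReal) := by
    rw [ENNReal.ofReal_toReal hne]; exact hb
  have := (ENNReal.ofReal_le_ofReal_iff ENNReal.toReal_nonneg).mp hb2
  linarith


/-- if it is NOT the case that `λᵢ < 0` for all `i ≤ q` and `λᵢ > 0` for all
`i > q` (all `λᵢ` nonzero), then any smooth `f ∈ L²(ℂⁿ)` solving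
`∂f/∂zⁱ = λᵢ z̄ⁱ f` (`i ≤ q`), `∂f/∂z̄ⁱ = −λᵢ zⁱ f` (`i > q`) vanishes identically;
equivalently `Ker □^{(q)}_{0,s} = {0}` when `p ∉ M(q)`. -/
theorem stmt_13 (n q : ℕ) (hq : q ≤ n) (lam : Fin n → ℝ) (hlam : ∀ i, lam i ≠ 0)
    (hsign : ¬ ((∀ i : Fin n, (i : ℕ) < q → lam i < 0) ∧
                 (∀ i : Fin n, q ≤ (i : ℕ) → 0 < lam i)))
    (f : (Fin n → ℂ) → ℂ) (hf : ContDiff ℝ (⊤ : ℕ∞) f)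
    (hL2 : MemLp f 2 (volume : Measure (Fin n → ℂ)))
    (heq1 : ∀ (z : Fin n → ℂ) (i : Fin n), (i : ℕ) < q →
      wD i f z = (lam i : ℂ) * (starRingEnd ℂ) (z i) * f z)
    (heq2 : ∀ (z : Fin n → ℂ) (i : Fin n), q ≤ (i : ℕ) →
      wDb i f z = -((lam i : ℂ)) * z i * f z) :
    ∀ z, f z = 0 := by
  classical
  by_contra hcon
  push_neg at hcon
  obtain ⟨z₀, hz₀⟩ := hcon
  have hfdiff : Differentiable ℝ f := hf.differentiable (by simp)
  -- extract a bad index and a unified function F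
  obtain ⟨i₀, μ, F, hμpos, hnormF, hFdiff, hFeq⟩ :
      ∃ (i₀ : Fin n) (μ : ℝ) (F : (Fin n → ℂ) → ℂ), 0 < μ ∧ (∀ z, ‖F z‖ = ‖f z‖) ∧
        Differentiable ℝ F ∧
        ∀ z, fderiv ℝ F z (Pi.single i₀ 1) - Complex.I * fderiv ℝ F z (Pi.single i₀ Complex.I)
          = 2 * (μ:ℂ) * (starRingEnd ℂ) (z i₀) * F z := by
    rcases not_and_or.mp hsign with hA | hB
    · push_neg at hA
      obtain ⟨i, hiq, hi⟩ := hA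
      refine ⟨i, lam i, f, lt_of_le_of_ne hi (Ne.symm (hlam i)), fun _ => rfl,
        hfdiff, fun z => ?_⟩
      have := heq1 z i hiq
      rw [wD] at this
      have h2 : fderiv ℝ f z (Pi.single i 1) - Complex.I * fderiv ℝ f z (Pi.single i Complex.I)
          = 2 * ((lam i : ℂ) * (starRingEnd ℂ) (z i) * f z) := by
        rw [← this]; ring
      rw [h2]; ring
    · push_neg at hB
      obtain ⟨i, hiq, hi⟩ := hB
      have hneg : lam i < 0 := lt_of_le_of_ne hi (hlam i)
      set C : ℂ →L[ℝ] ℂ := (Complex.conjCLE : ℂ ≃L[ℝ] ℂ).toContinuousLinearMap with hC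
      have hCdf : ∀ z v, fderiv ℝ (fun x => (starRingEnd ℂ) (f x)) z v
          = (starRingEnd ℂ) (fderiv ℝ f z v) := by
        intro z v
        have h1 : HasFDerivAt (fun x => (starRingEnd ℂ) (f x)) (C.comp (fderiv ℝ f z)) z := by
          have hc2 : HasFDerivAt (fun w : ℂ => (starRingEnd ℂ) w) C (f z) := C.hasFDerivAt
          exact hc2.comp z (hfdiff z).hasFDerivAt
        rw [h1.fderiv]; rfl
      refine ⟨i, -lam i, fun x => (starRingEnd ℂ) (f x), by linarith, fun z => RCLike.norm_conj _,
        fun z => (C.differentiable.comp (hfdiff)) z, fun z => ?_⟩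
      have := heq2 z i hiq
      rw [wDb] at this
      have h2 : fderiv ℝ f z (Pi.single i 1) + Complex.I * fderiv ℝ f z (Pi.single i Complex.I)
          = 2 * (-(lam i : ℂ) * z i * f z) := by
        rw [← this]; ring
      rw [hCdf z, hCdf z]
      have h3 := congrArg (starRingEnd ℂ) h2
      simp only [map_add, map_mul, map_sub, map_neg, Complex.conj_I, map_ofNat,
        Complex.conj_ofReal] at h3
      push_cast
      linear_combination h3
  have hFcont : Continuous F := hFdiff.continuous
  -- slice derivative setup
  set S : ℂ →L[ℝ] (Fin n → ℂ) :=
    LinearMap.toContinuousLinearMap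
      ((LinearMap.single ℂ (fun _ : Fin n => ℂ) i₀).restrictScalars ℝ) with hS
  have hSapp : ∀ v : ℂ, S v = Pi.single i₀ v := fun v => rfl
  have hupd_eq : ∀ (y : Fin n → ℂ), (fun w : ℂ => Function.update y i₀ w)
      = fun w => (y - Pi.single i₀ (y i₀)) + S w := by
    intro y
    funext w
    funext j
    by_cases hj : j = i₀
    · subst hj
      simp [hSapp, Function.update_apply]
    · simp [hSapp, Function.update_apply, hj, Pi.single_apply]
  have hslice_deriv : ∀ (y : Fin n → ℂ) (w : ℂ),
      HasFDerivAt (fun w : ℂ => F (Function.update y i₀ w))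
        ((fderiv ℝ F (Function.update y i₀ w)).comp S) w := by
    intro y w
    have hA : HasFDerivAt (fun w : ℂ => Function.update y i₀ w) S w := by
      rw [hupd_eq y]
      exact (S.hasFDerivAt).const_add _
    exact (hFdiff _).hasFDerivAt.comp w hA
  -- slice equation
  have hslice_eq : ∀ (y : Fin n → ℂ),
      ∀ w, fderiv ℝ (fun w : ℂ => F (Function.update y i₀ w)) w 1
        - Complex.I * fderiv ℝ (fun w : ℂ => F (Function.update y i₀ w)) w Complex.I
        = 2 * (μ:ℝ) * (starRingEnd ℂ) w * (fun w : ℂ => F (Function.update y i₀ w)) w := by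
    intro y w
    rw [(hslice_deriv y w).fderiv]
    have h1 : ((fderiv ℝ F (Function.update y i₀ w)).comp S) 1
        = fderiv ℝ F (Function.update y i₀ w) (Pi.single i₀ 1) := by
      simp [ContinuousLinearMap.comp_apply, hSapp]
    have h2 : ((fderiv ℝ F (Function.update y i₀ w)).comp S) Complex.I
        = fderiv ℝ F (Function.update y i₀ w) (Pi.single i₀ Complex.I) := by
      simp [ContinuousLinearMap.comp_apply, hSapp]
    rw [h1, h2]
    have := hFeq (Function.update y i₀ w)
    rw [Function.update_self] at this
    convert this using 2
    all_goals push_cast; ring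
  -- integrability
  set Φ : (Fin n → ℂ) → ENNReal := fun z => ENNReal.ofReal (‖f z‖^2) with hΦ
  have hΦmeas : Measurable Φ := ((hf.continuous.norm).pow 2).measurable.ennreal_ofReal
  have hTot : ∫⁻ z, Φ z ≠ ⊤ := by
    have hInt : Integrable (fun z => ‖f z‖ ^ (2:ℝ)) volume :=
      hL2.integrable_norm_rpow (by norm_num) (by norm_num)
    have hInt2 : Integrable (fun z => ‖f z‖ ^ 2) volume := by
      convert hInt using 2 with z
      rw [← Real.rpow_natCast ‖f z‖ 2]
      norm_num
    have := hInt2.hasFiniteIntegral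
    rw [hasFiniteIntegral_iff_norm] at this
    rw [hΦ]
    have heq : ∀ z : Fin n → ℂ, ENNReal.ofReal (‖f z‖^2) = ENNReal.ofReal ‖(‖f z‖^2)‖ := by
      intro z
      rw [Real.norm_eq_abs, _root_.abs_of_nonneg (by positivity : (0:ℝ) ≤ ‖f z‖^2)]
    simp_rw [heq]
    exact this.ne
  -- cylinder around z₀
  have hFz₀ : F z₀ ≠ 0 := by
    intro h0
    apply hz₀
    have := hnormF z₀
    rw [h0, norm_zero] at this
    exact norm_eq_zero.mp this.symm
  obtain ⟨δ, hδpos, hδ⟩ : ∃ δ > 0, ∀ z, dist z z₀ < δ → F z ≠ 0 := by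
    have hopen : IsOpen {z : Fin n → ℂ | F z ≠ 0} :=
      isOpen_compl_singleton.preimage hFcont
    obtain ⟨δ, hδpos, hball⟩ := Metric.isOpen_iff.mp hopen z₀ hFz₀
    exact ⟨δ, hδpos, fun z hz => hball hz⟩
  set c : ℂ := z₀ i₀ with hc
  -- slices through the cylinder are infinite
  have hslice_inf : ∀ y : Fin n → ℂ, (∀ j, j ≠ i₀ → dist (y j) (z₀ j) < δ) →
      ∫⁻ w : ℂ, Φ (Function.update y i₀ w) = ⊤ := by
    intro y hy
    have hcenter : F (Function.update y i₀ c) ≠ 0 := by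
      apply hδ
      rw [dist_pi_lt_iff hδpos]
      intro j
      by_cases hj : j = i₀
      · subst hj; simp [Function.update_self, hc, hδpos]
      · rw [Function.update_of_ne hj]; exact hy j hj
    have := slice_infinite hμpos
      (fun w => (hslice_deriv y w).differentiableAt) (hslice_eq y) hcenter
    rw [← this]
    congr 1
    funext w
    rw [hΦ]
    simp only
    rw [← hnormF]
  -- assemble with lmarginal
  have key : ∫⁻ z, Φ z = ⊤ := by
    rw [volume_pi, lintegral_eq_lmarginal_univ z₀,
      lmarginal_erase' _ hΦmeas (Finset.mem_univ i₀)]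
    set s : Finset (Fin n) := Finset.univ.erase i₀ with hsdef
    set Ψ : (Fin n → ℂ) → ENNReal :=
      (Set.indicator {y | ∀ j, j ≠ i₀ → dist (y j) (z₀ j) < δ} (fun _ => ⊤)) with hΨ
    have hmono : Ψ ≤ fun y => ∫⁻ w, Φ (Function.update y i₀ w) := by
      intro y
      rw [hΨ]
      by_cases hy : y ∈ {y : Fin n → ℂ | ∀ j, j ≠ i₀ → dist (y j) (z₀ j) < δ}
      · rw [Set.indicator_of_mem hy]
        exact le_of_eq (hslice_inf y hy).symm
      · rw [Set.indicator_of_notMem hy]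
        exact zero_le
    refine eq_top_iff.mpr (le_trans ?_ (lmarginal_mono hmono z₀))
    -- compute the marginal of the indicator
    rw [lmarginal]
    have hval : ∀ t : (∀ _ : s, ℂ), Ψ (Function.updateFinset z₀ s t)
        = Set.indicator (Set.univ.pi fun j : s => Metric.ball (z₀ j) δ) (fun _ => ⊤) t := by
      intro t
      rw [hΨ]
      by_cases ht : t ∈ Set.univ.pi fun j : s => Metric.ball (z₀ j) δ
      · rw [Set.indicator_of_mem ht, Set.indicator_of_mem]
        intro j hj
        have hjs : j ∈ s := by rw [hsdef]; exact Finset.mem_erase.mpr ⟨hj, Finset.mem_univ j⟩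
        rw [Function.updateFinset]
        simp only [hjs, dif_pos]
        have := ht ⟨j, hjs⟩ (Set.mem_univ _)
        simpa [Metric.mem_ball] using this
      · rw [Set.indicator_of_notMem ht, Set.indicator_of_notMem]
        intro hmem
        apply ht
        intro j _
        have hji : (j : Fin n) ≠ i₀ := (Finset.mem_erase.mp j.2).1
        have := hmem (j : Fin n) hji
        rw [Function.updateFinset] at this
        simp only [j.2, dif_pos] at this
        simpa [Metric.mem_ball] using this
    simp_rw [hval]
    rw [lintegral_indicator (MeasurableSet.univ_pi (fun j => measurableSet_ball))]
    rw [setLIntegral_const]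
    rw [Measure.pi_pi]
    have hprod : (∏ j : s, volume (Metric.ball (z₀ (j:Fin n)) δ)) ≠ 0 := by
      rw [Finset.prod_ne_zero_iff]
      intro j _
      exact (Metric.measure_ball_pos volume (z₀ j) hδpos).ne'
    rw [ENNReal.top_mul hprod]
  exact hTot key

end Aux
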